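/- Let G be a digraph in which every vertex lies on a directed loop in the sense of condition (A) (for each allowed elementary path, every vertex of each simplicial piece in its canonical loop decomposition belongs to some directed loop). Then every discrete Morse function on G is strictly positive on all vertices, hence trivial (its combinatorial gradient vector field is empty). -/

import Mathlib

/-- A digraph: a vertex set together with an irreflexive edge relation supported on the
vertex set (edges are ordered pairs off the diagonal). -/
structure DiGraph (V : Type) where
  verts : Set V
  Edge : V → V → Prop
  edge_mem_left : ∀ u v, Edge u v → u ∈ verts
  edge_mem_right : ∀ u v, Edge u v → v ∈ verts
  edge_ne : ∀ u v, Edge u v → u ≠ v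

variable {V : Type}

/-- An allowed elementary path: a nonempty list of vertices of `G` such that each
consecutive pair is a directed edge of `G`. -/
def IsAllowed (G : DiGraph V) (p : List V) : Prop :=
  p ≠ [] ∧ (∀ v ∈ p, v ∈ G.verts) ∧ p.Chain' G.Edge

/-- `Del p q` : `p` is obtained from `q` by deleting one vertex. -/
def Del (p q : List V) : Prop := ∃ i < q.length, p = q.eraseIdx i

/-- Value of a function on vertices extended to a path: the sum over its vertices. -/
def fval (f : V → ℝ) (p : List V) : ℝ := (p.map f).sum

/-- A discrete Morse function on a digraph `G`: a nonnegative function on vertices such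
that for every allowed elementary path `p` there is (i) at most one allowed elementary
path obtained from `p` by deleting one vertex with the same `f`-value, and (ii) at most
one allowed elementary path obtained from `p` by inserting one vertex with the same
`f`-value. -/
def IsMorse (G : DiGraph V) (f : V → ℝ) : Prop :=
  (∀ v, 0 ≤ f v) ∧
  ∀ p, IsAllowed G p →
    ((∀ β β', IsAllowed G β → Del β p → fval f β = fval f p →
        IsAllowed G β' → Del β' p → fval f β' = fval f p → β = β') ∧
     (∀ α α', IsAllowed G α → Del p α → fval f α = fval f p →
        IsAllowed G α' → Del p α' → fval f α' = fval f p → α = α'))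

/-- An allowed elementary path is critical if no allowed path obtained by deleting one
vertex has the same `f`-value, and no allowed path obtained by inserting one vertex has
the same `f`-value. -/
def IsCritical (G : DiGraph V) (f : V → ℝ) (p : List V) : Prop :=
  (¬ ∃ β, IsAllowed G β ∧ Del β p ∧ fval f β = fval f p) ∧
  (¬ ∃ α, IsAllowed G α ∧ Del p α ∧ fval f α = fval f p)

/-- A directed loop: an allowed elementary path `v₀ v₁ ⋯ vₙ v₀` with `n ≥ 1`. -/
def IsLoop (G : DiGraph V) (p : List V) : Prop :=
  IsAllowed G p ∧ 3 ≤ p.length ∧ p.head? = p.getLast?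

/-- A simplicial allowed elementary path: all vertices distinct. -/
def Simplicial (G : DiGraph V) (p : List V) : Prop := IsAllowed G p ∧ p.Nodup

/-- A pair of the combinatorial discrete gradient vector field `M(G,f)`:
`β` is obtained from `α` by inserting one vertex, and `f(α) = f(β)`. -/
def MPair (G : DiGraph V) (f : V → ℝ) (α β : List V) : Prop :=
  IsAllowed G α ∧ IsAllowed G β ∧ Del α β ∧ fval f α = fval f β

/-- `H` is a sub-digraph of `G`. -/
def Subdigraph (H G : DiGraph V) : Prop :=
  H.verts ⊆ G.verts ∧ ∀ u v, H.Edge u v → G.Edge u v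

/-- Glue (concatenate) a path with a list of further paths, identifying the last vertex
of each piece with the first vertex of the next. -/
def glueAll : List V → List (List V) → List V
  | p, [] => p
  | p, q :: rest => glueAll (p ++ q.tail) rest

/-- `L = [β₁, γ₁, β₂, γ₂, …, β_k]` is a decomposition of the allowed elementary path `α`
as a concatenation `β₁*γ₁*β₂*⋯*β_k` of simplicial allowed elementary paths `βᵢ`
(possibly single vertices) and directed loops `γᵢ`. -/
def IsDecomp (G : DiGraph V) (α : List V) (L : List (List V)) : Prop :=
  L ≠ [] ∧ L.length % 2 = 1 ∧
  (∀ i : Fin L.length, if i.val % 2 = 0 then Simplicial G (L.get i) else IsLoop G (L.get i)) ∧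
  (∀ i : Fin L.length, ∀ h : i.val + 1 < L.length,
    (L.get i).getLast? = (L.get ⟨i.val + 1, h⟩).head?) ∧
  glueAll L.headI L.tail = α

/-- A decomposition produced by the greedy algorithm that cuts at the first repeated
vertex: each simplicial piece, extended by the interior of the following loop, is still
duplicate-free. -/
def GreedyDecomp (G : DiGraph V) (α : List V) (L : List (List V)) : Prop :=
  IsDecomp G α L ∧
  ∀ i : Fin L.length, i.val % 2 = 0 →
    (if h : i.val + 1 < L.length
      then ((L.get i) ++ (L.get ⟨i.val + 1, h⟩).tail.dropLast).Nodup
      else (L.get i).Nodup)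

lemma fval_append (f : V → ℝ) (p q : List V) :
    fval f (p ++ q) = fval f p + fval f q := by
  simp [fval]

lemma no_zero_closed {G : DiGraph V} {f : V → ℝ} (hf : IsMorse G f) {p : List V} {v : V}
    (hall : IsAllowed G p) (hh : p.head? = some v) (hl : p.getLast? = some v)
    (hlen : 3 ≤ p.length) (hfv : f v = 0) : False := by
  obtain ⟨hne, hvert, hchain⟩ := hall
  rcases p with _ | ⟨a, t⟩
  · simp at hh
  have hav : a = v := by simpa using hh
  subst hav
  rcases t with _ | ⟨w, r⟩
  · simp at hlen
  have hEdge : G.Edge a w := (List.isChain_cons_cons.mp hchain).1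
  have hvw : a ≠ w := G.edge_ne _ _ hEdge
  have hglast : (a :: w :: r).getLast (by simp) = a := by
    rw [List.getLast?_eq_getLast (by simp)] at hl
    exact Option.some.inj hl
  have hpd : (a :: w :: r).dropLast ++ [a] = a :: w :: r := by
    conv_rhs => rw [← List.dropLast_append_getLast (l := a :: w :: r) (by simp)]
    rw [hglast]
  have hβ₁all : IsAllowed G (w :: r) :=
    ⟨by simp, fun x hx => hvert x (List.mem_cons_of_mem _ hx), (List.isChain_cons_cons.mp hchain).2⟩
  have hβ₂all : IsAllowed G ((a :: w :: r).dropLast) := by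
    refine ⟨by simp, fun x hx => hvert x ((List.dropLast_sublist _).mem hx), ?_⟩
    exact hchain.prefix ⟨[a], hpd⟩
  have hfβ₁ : fval f (w :: r) = fval f (a :: w :: r) := by simp [fval, hfv]
  have hfβ₂ : fval f ((a :: w :: r).dropLast) = fval f (a :: w :: r) := by
    have h1 := congrArg (fval f) hpd
    rw [fval_append] at h1
    have h2 : fval f [a] = 0 := by simp [fval, hfv]
    linarith
  have hdel1 : Del (w :: r) (a :: w :: r) := ⟨0, by simp, rfl⟩
  have hdel2 : Del ((a :: w :: r).dropLast) (a :: w :: r) := by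
    refine ⟨(a :: w :: r).length - 1, by simp, ?_⟩
    rw [List.eraseIdx_eq_take_drop_succ, List.dropLast_eq_take]
    have h1 : (a :: w :: r).length - 1 + 1 = (a :: w :: r).length := by simp
    rw [h1, List.drop_length, List.append_nil]
  have hp : IsAllowed G (a :: w :: r) := ⟨by simp, hvert, hchain⟩
  have := (hf.2 _ hp).1 _ _ hβ₁all hdel1 hfβ₁ hβ₂all hdel2 hfβ₂
  rw [List.dropLast_cons₂] at this
  simp only [List.cons.injEq] at this
  exact hvw this.1.symm

lemma exists_closed {G : DiGraph V} {c : List V} (hc : IsLoop G c) {v : V} (hv : v ∈ c) :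
    ∃ p : List V, IsAllowed G p ∧ p.head? = some v ∧ p.getLast? = some v ∧ 3 ≤ p.length := by
  obtain ⟨⟨hne, hvert, hchain⟩, hlen, hhl⟩ := hc
  rcases c with _ | ⟨a, t⟩
  · simp at hne
  have hglast : (a :: t).getLast? = some a := by rw [← hhl]; rfl
  by_cases hva : v = a
  · subst hva
    exact ⟨v :: t, ⟨by simp, hvert, hchain⟩, rfl, hglast, hlen⟩
  have hvt : v ∈ t := by
    rcases List.mem_cons.mp hv with h | h
    · exact absurd h hva
    · exact h
  obtain ⟨m₁, r, rfl⟩ := List.append_of_mem hvt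
  rcases List.eq_nil_or_concat r with rfl | ⟨m₂, b, rfl⟩
  · exfalso
    apply hva
    have h2 := hglast
    rw [show a :: (m₁ ++ [v]) = (a :: m₁) ++ [v] by simp, List.getLast?_concat] at h2
    exact Option.some.inj h2
  have hba : b = a := by
    have h2 := hglast
    rw [show a :: (m₁ ++ v :: m₂.concat b) = (a :: (m₁ ++ v :: m₂)) ++ [b] by simp,
      List.getLast?_concat] at h2
    exact Option.some.inj h2
  subst hba
  simp only [List.concat_eq_append] at hvert hchain hglast hva
  refine ⟨(v :: (m₂ ++ [b])) ++ (m₁ ++ [v]), ⟨by simp, ?_, ?_⟩, ?_, ?_, ?_⟩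
  · intro x hx
    apply hvert
    simp only [List.mem_append, List.mem_cons, List.mem_singleton] at hx ⊢
    tauto
  · rw [show List.Chain' G.Edge _ = List.IsChain G.Edge _ from rfl, List.isChain_append]
    refine ⟨?_, ?_, ?_⟩
    · exact hchain.suffix ⟨b :: m₁, by simp⟩
    · exact hchain.infix ⟨[b], m₂ ++ [b], by simp⟩
    · intro x hx y hy
      have hx' : x = b := by
        rw [show v :: (m₂ ++ [b]) = (v :: m₂) ++ [b] by simp, List.getLast?_concat] at hx
        exact (Option.mem_some_iff.mp hx).symm
      rw [hx']
      have hch : List.Chain' G.Edge (b :: ((m₁ ++ [v]) ++ (m₂ ++ [b]))) := by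
        rw [show (m₁ ++ [v]) ++ (m₂ ++ [b]) = m₁ ++ v :: (m₂ ++ [b]) by simp]
        exact hchain
      apply (List.isChain_cons.mp hch).1 y
      rw [List.head?_append_of_ne_nil _ (by simp)]
      exact hy
  · rw [List.head?_append_of_ne_nil _ (by simp)]; rfl
  · rw [show (v :: (m₂ ++ [b])) ++ (m₁ ++ [v]) = ((v :: (m₂ ++ [b])) ++ m₁) ++ [v] by simp,
      List.getLast?_concat]
  · simp; omega

/-- Let `G` be a digraph satisfying condition (A): for each allowed
elementary path, every vertex of each simplicial piece of its canonical (greedy) loop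
decomposition lies on some directed loop. Then every discrete Morse function on `G` is
strictly positive on all vertices, and hence its combinatorial discrete gradient vector
field is empty. -/
theorem morse_trivial_of_condA (G : DiGraph V)
    (hA : ∀ α L, IsAllowed G α → GreedyDecomp G α L →
      ∀ i : Fin L.length, i.val % 2 = 0 → ∀ v ∈ L.get i, ∃ c, IsLoop G c ∧ v ∈ c) :
    ∀ f : V → ℝ, IsMorse G f →
      (∀ v ∈ G.verts, 0 < f v) ∧ ∀ α β, ¬ MPair G f α β := by
  intro f hf
  have hpos : ∀ v ∈ G.verts, 0 < f v := by
    intro v hv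
    rcases lt_or_eq_of_le (hf.1 v) with h | h
    · exact h
    exfalso
    have hfv : f v = 0 := h.symm
    have hallv : IsAllowed G [v] := ⟨by simp, by simpa using hv, List.isChain_singleton v⟩
    have hgd : GreedyDecomp G [v] [[v]] := by
      refine ⟨⟨by simp, by simp, ?_, ?_, rfl⟩, ?_⟩
      · intro i
        have hlt := i.isLt
        simp only [List.length_cons, List.length_nil] at hlt
        have h0 : i = ⟨0, by norm_num⟩ := Fin.ext (show i.val = 0 by omega)
        subst h0
        have hS : Simplicial G [v] := ⟨hallv, by simp⟩
        simpa using hS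
      · intro i hlt
        have h2 := i.isLt
        simp only [List.length_cons, List.length_nil] at h2 hlt
        omega
      · intro i hi
        have hlt := i.isLt
        simp only [List.length_cons, List.length_nil] at hlt
        have h0 : i = ⟨0, by norm_num⟩ := Fin.ext (show i.val = 0 by omega)
        subst h0
        rw [dif_neg (by simp)]
        simp
    obtain ⟨c, hc, hvc⟩ := hA [v] [[v]] hallv hgd ⟨0, by norm_num⟩ rfl v (by simp [List.get])
    obtain ⟨p, hp, hph, hpl, hplen⟩ := exists_closed hc hvc
    exact no_zero_closed hf hp hph hpl hplen hfv
  refine ⟨hpos, ?_⟩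
  rintro α β ⟨hα, hβ, ⟨i, hi, heq⟩, hval⟩
  have hsplit : β = β.take i ++ β[i] :: β.drop (i + 1) := by
    conv_lhs => rw [← List.take_append_drop i β]
    rw [List.drop_eq_getElem_cons hi]
  have hcons : fval f (β[i] :: β.drop (i + 1)) = f β[i] + fval f (β.drop (i + 1)) := by
    unfold fval
    rw [List.map_cons, List.sum_cons]
  have h1 : fval f β = fval f (β.take i) + f β[i] + fval f (β.drop (i + 1)) := by
    conv_lhs => rw [hsplit]
    rw [fval_append, hcons]
    ring
  have h2 : fval f α = fval f (β.take i) + fval f (β.drop (i + 1)) := by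
    rw [heq, List.eraseIdx_eq_take_drop_succ, fval_append]
  have hmem : β[i] ∈ G.verts := hβ.2.1 _ (List.getElem_mem hi)
  have := hpos _ hmem
  rw [h1, h2] at hval
  linarith
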